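/- arXiv:2007.06365 — 4 statements merged into one kernel-verified Lean document; each statement's English description precedes it below -/
import Mathlib

section
/- Let m ≥ 2 and n ≥ 1 be integers and let W = (1/m)·A, where A is the (n+1)×(n+1) real matrix with A 0 j = m−1 for 0 ≤ j ≤ n−1, A 0 n = 0, and for 1 ≤ i ≤ n: A i j = 1 if j = i−1 and 0 otherwise. Then the matrix I − W is invertible, and its inverse has entries ((I − W)⁻¹)_{i,j} = m^{n−i} when j ≤ i and ((I − W)⁻¹)_{i,j} = m^{n−i} − m^{j−i} when j > i, for all 0 ≤ i, j ≤ n. -/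
/-- For integers `m ≥ 2`, `n ≥ 1`, with `A` the `(n+1)×(n+1)` real matrix whose first row is
`(m-1, …, m-1, 0)` and whose row `i ≥ 1` has a single `1` in column `i-1`, and `W = (1/m)·A`,
the matrix `I − W` is invertible and `((I − W)⁻¹)_{i,j} = m^{n−i}` for `j ≤ i`, and
`((I − W)⁻¹)_{i,j} = m^{n−i} − m^{j−i}` for `j > i`. -/
theorem stmt_14 (m n : ℕ) (hm : 2 ≤ m) (hn : 1 ≤ n)
    (A W : Matrix (Fin (n + 1)) (Fin (n + 1)) ℝ)
    (hA : ∀ i j : Fin (n + 1), A i j =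
      if (i : ℕ) = 0 then (if (j : ℕ) < n then (m : ℝ) - 1 else 0)
      else (if (j : ℕ) + 1 = (i : ℕ) then 1 else 0))
    (hW : W = (1 / (m : ℝ)) • A) :
    IsUnit (1 - W) ∧
      ∀ i j : Fin (n + 1), (1 - W)⁻¹ i j =
        if (j : ℕ) ≤ (i : ℕ) then (m : ℝ) ^ (n - (i : ℕ))
        else (m : ℝ) ^ (n - (i : ℕ)) - (m : ℝ) ^ ((j : ℕ) - (i : ℕ)) := by
  have hm0 : (m : ℝ) ≠ 0 := by
    have : (2:ℝ) ≤ (m:ℝ) := by exact_mod_cast hm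
    linarith
  set B : Matrix (Fin (n + 1)) (Fin (n + 1)) ℝ := Matrix.of fun i j =>
    if (j : ℕ) ≤ (i : ℕ) then (m : ℝ) ^ (n - (i : ℕ))
    else (m : ℝ) ^ (n - (i : ℕ)) - (m : ℝ) ^ ((j : ℕ) - (i : ℕ)) with hB
  have key : B * (1 - W) = 1 := by
    ext i k
    rw [Matrix.mul_apply]
    have expand : ∀ j : Fin (n+1), B i j * (1 - W) j k
        = B i j * (if j = k then 1 else 0) - B i j * ((1 / (m:ℝ)) * A j k) := by
      intro j
      rw [hW]
      simp [Matrix.sub_apply, Matrix.one_apply, mul_sub]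
    rw [Finset.sum_congr rfl fun j _ => expand j, Finset.sum_sub_distrib]
    have h1 : ∑ j, B i j * (if j = k then 1 else 0) = B i k := by
      simp [mul_ite]
    have hS : ∑ j, B i j * ((1 / (m:ℝ)) * A j k)
        = (1 / (m:ℝ)) * (B i 0 * (if (k:ℕ) < n then (m:ℝ) - 1 else 0)
            + (if h : (k:ℕ) < n then B i ⟨(k:ℕ)+1, by omega⟩ else 0)) := by
      have : ∀ j : Fin (n+1), B i j * ((1 / (m:ℝ)) * A j k)
          = (1 / (m:ℝ)) * (B i j * A j k) := by intro j; ring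
      rw [Finset.sum_congr rfl fun j _ => this j, ← Finset.mul_sum]
      congr 1
      rw [Fin.sum_univ_succ]
      congr 1
      · rw [hA]; simp
      · have hA0 : ∀ j : Fin n, A j.succ k = if (k:ℕ) = (j:ℕ) then 1 else 0 := by
          intro j
          rw [hA]
          simp only [Fin.val_succ]
          rw [if_neg (by omega)]
          congr 1
          simp [eq_comm]
        simp only [fun j : Fin n => hA0 j, mul_ite, mul_one, mul_zero]
        by_cases h : (k:ℕ) < n
        · rw [dif_pos h, Finset.sum_eq_single (⟨(k:ℕ), h⟩ : Fin n)]
          · rw [if_pos rfl]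
            exact congrArg (B i) (Fin.ext rfl)
          · intro b _ hb
            exact if_neg fun hc => hb (Fin.ext hc.symm)
          · simp
        · rw [dif_neg h, Finset.sum_eq_zero]
          intro b _
          rw [if_neg]
          have := b.isLt
          omega
    rw [h1, hS]
    have hB0 : B i 0 = (m:ℝ) ^ (n - (i:ℕ)) := by
      simp [hB]
    have hone : (1 : Matrix (Fin (n+1)) (Fin (n+1)) ℝ) i k
        = if (i:ℕ) = (k:ℕ) then 1 else 0 := by
      rw [Matrix.one_apply]
      congr 1
      simp [Fin.ext_iff]
    rw [hone, hB0]
    have hiLt := i.isLt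
    have hkLt := k.isLt
    by_cases hk : (k:ℕ) < n
    · rw [if_pos hk, dif_pos hk]
      rcases lt_trichotomy (k:ℕ) (i:ℕ) with hlt | heq | hgt
      · -- k < i : entry should be 0
        have hBk : B i k = (m:ℝ) ^ (n - (i:ℕ)) := by
          simp only [hB, Matrix.of_apply]; rw [if_pos (by omega)]
        have hBk1 : B i ⟨(k:ℕ)+1, by omega⟩ = (m:ℝ) ^ (n - (i:ℕ)) := by
          simp only [hB, Matrix.of_apply]; rw [if_pos (by simpa using hlt)]
        rw [hBk, hBk1, if_neg (by omega)]
        field_simp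
        ring
      · -- k = i : entry should be 1
        have hBk : B i k = (m:ℝ) ^ (n - (i:ℕ)) := by
          simp only [hB, Matrix.of_apply]; rw [if_pos (by omega)]
        have hBk1 : B i ⟨(k:ℕ)+1, by omega⟩
            = (m:ℝ) ^ (n - (i:ℕ)) - (m:ℝ) := by
          simp only [hB, Matrix.of_apply]
          rw [if_neg (by simp; omega)]
          congr 1
          have : (k:ℕ) + 1 - (i:ℕ) = 1 := by omega
          rw [this, pow_one]
        rw [hBk, hBk1, if_pos heq.symm]
        field_simp
        ring
      · -- k > i : entry should be 0
        have hBk : B i k = (m:ℝ) ^ (n - (i:ℕ)) - (m:ℝ) ^ ((k:ℕ) - (i:ℕ)) := by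
          simp only [hB, Matrix.of_apply]; rw [if_neg (by omega)]
        have hBk1 : B i ⟨(k:ℕ)+1, by omega⟩
            = (m:ℝ) ^ (n - (i:ℕ)) - (m:ℝ) * (m:ℝ) ^ ((k:ℕ) - (i:ℕ)) := by
          simp only [hB, Matrix.of_apply]
          rw [if_neg (by simp; omega)]
          congr 1
          have : (k:ℕ) + 1 - (i:ℕ) = ((k:ℕ) - (i:ℕ)) + 1 := by omega
          rw [this, pow_succ]
          ring
        rw [hBk, hBk1, if_neg (by omega)]
        field_simp
        ring
    · -- k = n
      have hkn : (k:ℕ) = n := by omega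
      rw [if_neg hk, dif_neg hk]
      by_cases hi : (i:ℕ) = n
      · have hBk : B i k = 1 := by
          simp only [hB, Matrix.of_apply]; rw [if_pos (by omega)]
          simp [hi]
        rw [hBk, if_pos (by omega)]
        ring
      · have hBk : B i k = 0 := by
          simp only [hB, Matrix.of_apply]
          rw [if_neg (by omega)]
          rw [hkn]
          ring
        rw [hBk, if_neg (by omega)]
        ring
  have key2 : (1 - W) * B = 1 := mul_eq_one_comm.mp key
  refine ⟨⟨⟨1 - W, B, key2, key⟩, rfl⟩, ?_⟩
  intro i j
  rw [Matrix.inv_eq_left_inv key]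
  simp [hB]
end

section
/- Let m ≥ 2 and n ≥ 1 be integers and let W = (1/m)·A, where A is the (n+1)×(n+1) real matrix with A 0 j = m−1 for 0 ≤ j ≤ n−1, A 0 n = 0, and for 1 ≤ i ≤ n: A i j = 1 if j = i−1 and 0 otherwise. Then the bottom-left entry of W·((I − W)⁻¹)² equals m·(m^n − 1)/(m − 1), i.e. (W·(I − W)⁻¹·(I − W)⁻¹)_{n,0} = m·(m^n − 1)/(m − 1). -/
/-- For integers `m ≥ 2`, `n ≥ 1`, with `A` the `(n+1)×(n+1)` real matrix whose first row is
`(m-1, …, m-1, 0)` and whose row `i ≥ 1` has a single `1` in column `i-1`, and `W = (1/m)·A`,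
the bottom-left entry of `W·((I − W)⁻¹)²` equals `m·(mⁿ − 1)/(m − 1)`. -/
theorem stmt_15 (m n : ℕ) (hm : 2 ≤ m) (hn : 1 ≤ n)
    (A W : Matrix (Fin (n + 1)) (Fin (n + 1)) ℝ)
    (hA : ∀ i j : Fin (n + 1), A i j =
      if (i : ℕ) = 0 then (if (j : ℕ) < n then (m : ℝ) - 1 else 0)
      else (if (j : ℕ) + 1 = (i : ℕ) then 1 else 0))
    (hW : W = (1 / (m : ℝ)) • A) :
    (W * (1 - W)⁻¹ * (1 - W)⁻¹) (Fin.last n) 0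
      = (m : ℝ) * ((m : ℝ) ^ n - 1) / ((m : ℝ) - 1) := by
  have hm0 : (m : ℝ) ≠ 0 := by positivity
  have hm2 : (m : ℝ) - 1 ≠ 0 := by
    have : (2 : ℝ) ≤ (m : ℝ) := by exact_mod_cast hm
    linarith
  set B : Matrix (Fin (n + 1)) (Fin (n + 1)) ℝ :=
    fun i j => (m : ℝ) ^ (n - (i : ℕ)) -
      (if (i : ℕ) < (j : ℕ) then (m : ℝ) ^ ((j : ℕ) - (i : ℕ)) else 0) with hB
  have geom : ∀ k : ℕ,
      ((m : ℝ) - 1) * ∑ t ∈ Finset.range k, (m : ℝ) ^ t = (m : ℝ) ^ k - 1 := by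
    intro k
    rw [mul_comm]
    exact geom_sum_mul _ _
  have sumpow : ∀ k : ℕ, ∑ t ∈ Finset.range k, (m : ℝ) ^ (k - t)
      = (m : ℝ) * ∑ t ∈ Finset.range k, (m : ℝ) ^ t := by
    intro k
    rw [← Finset.sum_range_reflect, Finset.mul_sum]
    refine Finset.sum_congr rfl fun t ht => ?_
    rw [Finset.mem_range] at ht
    have h1 : k - (k - 1 - t) = t + 1 := by omega
    rw [h1, pow_succ]
    ring
  have hinv : (1 - W) * B = 1 := by
    ext i j
    rw [Matrix.mul_apply, Matrix.one_apply]
    have hW' : ∀ k : Fin (n + 1), (1 - W) i k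
        = (if i = k then (1 : ℝ) else 0) - (1 / (m : ℝ)) * A i k := by
      intro k
      simp [hW, Matrix.sub_apply, Matrix.one_apply]
    simp only [hW']
    rw [show (∑ k, ((if i = k then (1 : ℝ) else 0) - (1 / (m : ℝ)) * A i k) * B k j)
        = (∑ k, (if i = k then B k j else 0))
          - ∑ k, (1 / (m : ℝ)) * A i k * B k j by
      rw [← Finset.sum_sub_distrib]
      exact Finset.sum_congr rfl fun k _ => by by_cases h : i = k <;> simp [h] <;> try ring]
    rw [Finset.sum_ite_eq]
    simp only [Finset.mem_univ, if_true]
    by_cases hi : (i : ℕ) = 0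
    · -- first row case
      have hi0 : i = 0 := by ext; simpa using hi
      subst hi0
      have hjn : (j : ℕ) ≤ n := by omega
      have hstep : ∀ k : Fin (n + 1),
          (1 / (m : ℝ)) * A 0 k * B k j
          = (((m : ℝ) - 1) / m) * (if (k : ℕ) < n then B k j else 0) := by
        intro k
        rw [hA, show (((0 : Fin (n + 1)) : ℕ)) = 0 from rfl, if_pos rfl]
        by_cases h : (k : ℕ) < n
        · rw [if_pos h, if_pos h]; ring
        · rw [if_neg h, if_neg h]; ring
      rw [Finset.sum_congr rfl fun k _ => hstep k, ← Finset.mul_sum]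
      have hS : (∑ k : Fin (n + 1), (if (k : ℕ) < n then B k j else 0))
          = ∑ t ∈ Finset.range (n + 1),
              (if t < n then ((m : ℝ) ^ (n - t) -
                (if t < (j : ℕ) then (m : ℝ) ^ ((j : ℕ) - t) else 0)) else 0) :=
        Fin.sum_univ_eq_sum_range
          (fun t => if t < n then ((m : ℝ) ^ (n - t) -
            (if t < (j : ℕ) then (m : ℝ) ^ ((j : ℕ) - t) else 0)) else 0) (n + 1)
      rw [hS, Finset.sum_range_succ, if_neg (lt_irrefl n), add_zero,
        Finset.sum_congr rfl (fun t ht => if_pos (Finset.mem_range.1 ht)),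
        Finset.sum_sub_distrib]
      have hsub : (∑ t ∈ Finset.range n,
            if t < (j : ℕ) then (m : ℝ) ^ ((j : ℕ) - t) else 0)
          = ∑ t ∈ Finset.range (j : ℕ), (m : ℝ) ^ ((j : ℕ) - t) := by
        rw [← Finset.sum_subset (Finset.range_subset_range.mpr hjn)
          (fun x _ hx => if_neg (by simpa using hx))]
        exact Finset.sum_congr rfl fun t ht => if_pos (Finset.mem_range.1 ht)
      rw [hsub, sumpow, sumpow]
      have hgn := geom n
      have hgj := geom (j : ℕ)
      set Gn := ∑ t ∈ Finset.range n, (m : ℝ) ^ t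
      set Gj := ∑ t ∈ Finset.range (j : ℕ), (m : ℝ) ^ t
      show B 0 j - _ = _
      have hB0j : B 0 j = (m : ℝ) ^ n -
          (if 0 < (j : ℕ) then (m : ℝ) ^ ((j : ℕ)) else 0) := by
        show (m : ℝ) ^ (n - ((0 : Fin (n + 1)) : ℕ)) -
          (if ((0 : Fin (n + 1)) : ℕ) < (j : ℕ)
            then (m : ℝ) ^ ((j : ℕ) - ((0 : Fin (n + 1)) : ℕ)) else 0) = _
        norm_num
      have key : ∀ x y : ℝ, (((m : ℝ) - 1) / m) * ((m : ℝ) * x - (m : ℝ) * y)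
          = ((m : ℝ) - 1) * x - ((m : ℝ) - 1) * y := by
        intro x y; field_simp
      rw [hB0j, key Gn Gj, hgn, hgj]
      by_cases hj : (j : ℕ) = 0
      · rw [if_neg (by omega), if_pos (show (0 : Fin (n + 1)) = j by ext; simp [hj]), hj]
        norm_num
      · rw [if_pos (by omega), if_neg (fun h => hj (by rw [← h]; rfl))]
        ring
    · -- rows i ≥ 1
      have hi1 : 1 ≤ (i : ℕ) := by omega
      set p : Fin (n + 1) := ⟨(i : ℕ) - 1, by omega⟩ with hp
      have hAk : ∀ k : Fin (n + 1), A i k = if k = p then (1 : ℝ) else 0 := by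
        intro k
        rw [hA, if_neg hi]
        by_cases h : k = p
        · subst h
          rw [if_pos (by simp [hp]; omega), if_pos rfl]
        · rw [if_neg (fun hc => h (by ext; simp [hp]; omega)), if_neg h]
      rw [Finset.sum_congr rfl (fun k _ => by rw [hAk k])]
      rw [show (∑ k, (1 / (m : ℝ)) * (if k = p then (1 : ℝ) else 0) * B k j)
          = ∑ k, (if k = p then (1 / (m : ℝ)) * B k j else 0) by
        exact Finset.sum_congr rfl fun k _ => by by_cases h : k = p <;> simp [h]]
      rw [Finset.sum_ite_eq']
      simp only [Finset.mem_univ, if_true]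
      -- now: B i j - (1/m) * B p j = if i = j then 1 else 0
      have hBij : B i j = (m : ℝ) ^ (n - (i : ℕ)) -
          (if (i : ℕ) < (j : ℕ) then (m : ℝ) ^ ((j : ℕ) - (i : ℕ)) else 0) := rfl
      have hBpj : B p j = (m : ℝ) ^ (n - ((i : ℕ) - 1)) -
          (if (i : ℕ) - 1 < (j : ℕ) then (m : ℝ) ^ ((j : ℕ) - ((i : ℕ) - 1)) else 0) := rfl
      rw [hBij, hBpj]
      have hin : (i : ℕ) ≤ n := by omega
      have e1 : n - ((i : ℕ) - 1) = (n - (i : ℕ)) + 1 := by omega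
      rcases lt_trichotomy (j : ℕ) (i : ℕ) with h | h | h
      · rw [if_neg (by omega), if_neg (by omega), if_neg (by omega), e1, pow_succ]
        field_simp
        ring
      · have hij : i = j := by ext; omega
        rw [if_neg (by omega), if_pos (by omega), if_pos hij, e1, pow_succ,
          show (j : ℕ) - ((i : ℕ) - 1) = 1 by omega, pow_one]
        field_simp
        ring
      · have e2 : (j : ℕ) - ((i : ℕ) - 1) = ((j : ℕ) - (i : ℕ)) + 1 := by omega
        rw [if_pos (by omega), if_pos (by omega), if_neg (by omega), e1, e2,
          pow_succ, pow_succ]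
        field_simp
        ring
  rw [Matrix.inv_eq_right_inv hinv]
  -- final computation
  set p : Fin (n + 1) := ⟨n - 1, by omega⟩ with hp
  have hWB : ∀ jj : Fin (n + 1), (W * B) (Fin.last n) jj = (1 / (m : ℝ)) * B p jj := by
    intro jj
    rw [Matrix.mul_apply]
    have hWk : ∀ k : Fin (n + 1), W (Fin.last n) k
        = (1 / (m : ℝ)) * (if k = p then (1 : ℝ) else 0) := by
      intro k
      rw [hW]
      simp only [Matrix.smul_apply, smul_eq_mul, hA]
      rw [if_neg (by simp only [Fin.val_last]; omega)]
      by_cases h : k = p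
      · subst h
        rw [if_pos (by simp only [Fin.val_last, hp]; omega), if_pos rfl]
      · rw [if_neg (fun hc => h (by ext; simp only [Fin.val_last, hp] at hc ⊢; omega)),
          if_neg h]
    rw [Finset.sum_congr rfl fun k _ => by rw [hWk k]]
    rw [show (∑ k, (1 / (m : ℝ)) * (if k = p then (1 : ℝ) else 0) * B k jj)
        = ∑ k, (if k = p then (1 / (m : ℝ)) * B k jj else 0) from
      Finset.sum_congr rfl fun k _ => by by_cases h : k = p <;> simp [h]]
    rw [Finset.sum_ite_eq']
    simp
  rw [Matrix.mul_apply, Finset.sum_congr rfl fun jj _ => by rw [hWB jj]]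
  have hBp : ∀ jj : Fin (n + 1), B p jj = if (jj : ℕ) < n then (m : ℝ) else 0 := by
    intro jj
    have hval : (p : ℕ) = n - 1 := rfl
    show (m : ℝ) ^ (n - (p : ℕ)) - _ = _
    rw [hval, show n - (n - 1) = 1 by omega, pow_one]
    by_cases h : (jj : ℕ) < n
    · rw [if_neg (by omega), if_pos h, sub_zero]
    · have hjj : (jj : ℕ) = n := by omega
      rw [if_pos (by omega), if_neg h, hjj, show n - (n - 1) = 1 by omega, pow_one, sub_self]
  have hB0 : ∀ jj : Fin (n + 1), B jj 0 = (m : ℝ) ^ (n - (jj : ℕ)) := by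
    intro jj
    show (m : ℝ) ^ (n - (jj : ℕ)) - _ = _
    rw [if_neg (by simp), sub_zero]
  have hterm : ∀ jj : Fin (n + 1), (1 / (m : ℝ)) * B p jj * B jj 0
      = if (jj : ℕ) < n then (m : ℝ) ^ (n - (jj : ℕ)) else 0 := by
    intro jj
    rw [hBp jj, hB0 jj]
    by_cases h : (jj : ℕ) < n
    · rw [if_pos h, if_pos h]
      field_simp
    · rw [if_neg h, if_neg h]
      ring
  rw [Finset.sum_congr rfl fun jj _ => hterm jj]
  rw [Fin.sum_univ_eq_sum_range (fun t => if t < n then (m : ℝ) ^ (n - t) else 0) (n + 1)]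
  rw [Finset.sum_range_succ, if_neg (lt_irrefl n), add_zero,
    Finset.sum_congr rfl (fun t ht => if_pos (Finset.mem_range.1 ht)), sumpow]
  have hgn := geom n
  field_simp
  linear_combination hgn
end

section
/- Let m ≥ 2 and n ≥ 1 be integers and let W = (1/m)·A, where A is the (n+1)×(n+1) real matrix with A 0 j = m−1 for 0 ≤ j ≤ n−1, A 0 n = 0, and for 1 ≤ i ≤ n: A i j = 1 if j = i−1 and 0 otherwise. Then the bottom-left entry of W·(I + W)·((I − W)⁻¹)³ equals (m/(m−1)²)·(2·m^{2n+1} − (2n+3)·m^{n+1} + (2n+1)·m^n + m − 1). -/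
open Finset in
private lemma aux_ite16 (H : ℕ → ℝ) (i M : ℕ) (h : i + 1 ≤ M) :
    ∑ k ∈ range M, (if i < k then H k else 0)
      = ∑ k ∈ range M, H k - ∑ k ∈ range (i + 1), H k := by
  have h1 : ∑ k ∈ range (i+1), (if i < k then H k else 0) = 0 :=
    Finset.sum_eq_zero fun k hk => by rw [Finset.mem_range] at hk; rw [if_neg (by omega)]
  have h2 : ∑ k ∈ Finset.Ico (i+1) M, (if i < k then H k else 0)
      = ∑ k ∈ Finset.Ico (i+1) M, H k :=
    Finset.sum_congr rfl fun k hk => by rw [Finset.mem_Ico] at hk; rw [if_pos (by omega)]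
  rw [← Finset.sum_range_add_sum_Ico _ h, h1, zero_add, h2,
    ← Finset.sum_range_add_sum_Ico H h]
  ring

open Finset in
private lemma aux_id16 (M : ℕ) : ∑ k ∈ range M, (k : ℝ) = (M : ℝ) * ((M : ℝ) - 1) / 2 := by
  induction M with
  | zero => simp
  | succ k ih => rw [Finset.sum_range_succ, ih]; push_cast; ring

open Finset in
private lemma aux_lin16 (c1 c2 : ℝ) (M : ℕ) :
    ∑ k ∈ range M, (c1 + c2 * (k:ℝ)) = (M:ℝ) * c1 + c2 * ((M:ℝ) * ((M:ℝ)-1) / 2) := by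
  rw [Finset.sum_add_distrib, Finset.sum_const, ← Finset.mul_sum, aux_id16, card_range,
    nsmul_eq_mul]

open Finset in
private lemma aux_geom16 (m : ℝ) (hm0 : m ≠ 0) (hm1 : m - 1 ≠ 0) (M : ℕ) :
    ∑ k ∈ range (M+1), (m⁻¹)^k = (m - (m⁻¹)^M) / (m - 1) := by
  rw [eq_div_iff hm1]
  induction M with
  | zero => simp
  | succ M ih =>
    rw [Finset.sum_range_succ, add_mul, ih]
    linear_combination ((m⁻¹)^M) * (mul_inv_cancel₀ hm0)

open Finset in
private lemma aux_kgeom16 (m : ℝ) (hm0 : m ≠ 0) (hm1 : m - 1 ≠ 0) (M : ℕ) :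
    ∑ k ∈ range (M+1), (k:ℝ) * (m⁻¹)^k
      = ((M:ℝ) * (m⁻¹)^M - ((M:ℝ)+1) * m * (m⁻¹)^M + m) / (m - 1)^2 := by
  rw [eq_div_iff (pow_ne_zero 2 hm1)]
  induction M with
  | zero => simp
  | succ M ih =>
    rw [Finset.sum_range_succ, add_mul, ih]
    push_cast
    linear_combination ((m⁻¹)^M*(((M:ℝ)+1)*m - (M:ℝ))) * (mul_inv_cancel₀ hm0)

open Finset in
private lemma aux2_16 (m n i : ℕ) (hm : 2 ≤ m) (hi : i ≤ n) :
    ∑ k ∈ range (n+1), ((((m:ℝ))^n - if i < k then (m:ℝ)^k else 0) * ((m:ℝ)⁻¹)^i)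
        * ((m:ℝ)^n * ((m:ℝ)⁻¹)^k)
    = (m:ℝ)^n * ((m:ℝ)⁻¹)^i
        * (((m:ℝ)^(n+1) - 1)/((m:ℝ) - 1) - (n:ℝ) + (i:ℝ)) := by
  have hm2 : (2:ℝ) ≤ (m:ℝ) := by exact_mod_cast hm
  have hm0 : (m:ℝ) ≠ 0 := by linarith
  have hm1 : (m:ℝ) - 1 ≠ 0 := by linarith
  have hcan : ∀ k : ℕ, (m:ℝ)^k * ((m:ℝ)⁻¹)^k = 1 := fun k => by
    rw [← mul_pow, mul_inv_cancel₀ hm0, one_pow]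
  have hterm : ∀ k ∈ range (n+1),
      ((((m:ℝ))^n - if i < k then (m:ℝ)^k else 0) * ((m:ℝ)⁻¹)^i)
        * ((m:ℝ)^n * ((m:ℝ)⁻¹)^k)
      = (m:ℝ)^n * (m:ℝ)^n * ((m:ℝ)⁻¹)^i * ((m:ℝ)⁻¹)^k
          - (if i < k then (m:ℝ)^n * ((m:ℝ)⁻¹)^i + 0 * (k:ℝ) else 0) := by
    intro k _
    by_cases h : i < k
    · rw [if_pos h, if_pos h]
      linear_combination (-(m:ℝ)^n * ((m:ℝ)⁻¹)^i) * hcan k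
    · rw [if_neg h, if_neg h]
      ring
  rw [Finset.sum_congr rfl hterm, Finset.sum_sub_distrib,
    aux_ite16 _ i (n+1) (by omega), ← Finset.mul_sum, aux_geom16 _ hm0 hm1 n,
    aux_lin16, aux_lin16]
  rw [inv_pow, inv_pow]
  push_cast
  field_simp
  ring

open Finset in
private lemma aux3_16 (m n i : ℕ) (hm : 2 ≤ m) (hi : i ≤ n) :
    ∑ k ∈ range (n+1), ((((m:ℝ))^n - if i < k then (m:ℝ)^k else 0) * ((m:ℝ)⁻¹)^i)
        * ((m:ℝ)^n * ((m:ℝ)⁻¹)^k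
            * (((m:ℝ)^(n+1) - 1)/((m:ℝ) - 1) - (n:ℝ) + (k:ℝ)))
    = (m:ℝ)^n * ((m:ℝ)⁻¹)^i
        * ((((m:ℝ)^(n+1) - 1)/((m:ℝ) - 1))^2
            - ((m:ℝ) * ((n:ℝ)*(m:ℝ)^(n+1) - ((n:ℝ)+1)*(m:ℝ)^n + 1))/((m:ℝ)-1)^2
            - ((n:ℝ) - (i:ℝ)) * (((m:ℝ)^(n+1) - 1)/((m:ℝ) - 1))
            + ((n:ℝ) - (i:ℝ)) * (((n:ℝ) - (i:ℝ)) - 1) / 2) := by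
  have hm2 : (2:ℝ) ≤ (m:ℝ) := by exact_mod_cast hm
  have hm0 : (m:ℝ) ≠ 0 := by linarith
  have hm1 : (m:ℝ) - 1 ≠ 0 := by linarith
  have hcan : ∀ k : ℕ, (m:ℝ)^k * ((m:ℝ)⁻¹)^k = 1 := fun k => by
    rw [← mul_pow, mul_inv_cancel₀ hm0, one_pow]
  set S : ℝ := ((m:ℝ)^(n+1) - 1)/((m:ℝ) - 1) with hS
  have hterm : ∀ k ∈ range (n+1),
      ((((m:ℝ))^n - if i < k then (m:ℝ)^k else 0) * ((m:ℝ)⁻¹)^i)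
        * ((m:ℝ)^n * ((m:ℝ)⁻¹)^k * (S - (n:ℝ) + (k:ℝ)))
      = ((m:ℝ)^n * (m:ℝ)^n * ((m:ℝ)⁻¹)^i * (S - (n:ℝ))) * ((m:ℝ)⁻¹)^k
          + ((m:ℝ)^n * (m:ℝ)^n * ((m:ℝ)⁻¹)^i) * ((k:ℝ) * ((m:ℝ)⁻¹)^k)
          - (if i < k then ((m:ℝ)^n * ((m:ℝ)⁻¹)^i * (S - (n:ℝ)))
              + ((m:ℝ)^n * ((m:ℝ)⁻¹)^i) * (k:ℝ) else 0) := by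
    intro k _
    by_cases h : i < k
    · rw [if_pos h, if_pos h]
      linear_combination (-(m:ℝ)^n * ((m:ℝ)⁻¹)^i * (S - (n:ℝ) + (k:ℝ))) * hcan k
    · rw [if_neg h, if_neg h]
      ring
  rw [Finset.sum_congr rfl hterm, Finset.sum_sub_distrib, Finset.sum_add_distrib,
    ← Finset.mul_sum, ← Finset.mul_sum,
    aux_ite16 _ i (n+1) (by omega), aux_geom16 _ hm0 hm1 n, aux_kgeom16 _ hm0 hm1 n,
    aux_lin16, aux_lin16]
  rw [hS, inv_pow, inv_pow]
  push_cast
  field_simp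
  ring

private lemma aux_final16 (m n : ℕ) (hm : 2 ≤ m) (hn : 1 ≤ n) :
    ((((m:ℝ)^(n+1) - 1)/((m:ℝ) - 1))^2
        - ((m:ℝ) * ((n:ℝ)*(m:ℝ)^(n+1) - ((n:ℝ)+1)*(m:ℝ)^n + 1))/((m:ℝ)-1)^2
        - 1*(((m:ℝ)^(n+1) - 1)/((m:ℝ) - 1)) + 1*(1-1)/2)
      + ((((m:ℝ)^(n+1) - 1)/((m:ℝ) - 1))^2
        - ((m:ℝ) * ((n:ℝ)*(m:ℝ)^(n+1) - ((n:ℝ)+1)*(m:ℝ)^n + 1))/((m:ℝ)-1)^2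
        - 2*(((m:ℝ)^(n+1) - 1)/((m:ℝ) - 1)) + 2*(2-1)/2)
    = (m : ℝ) / ((m : ℝ) - 1) ^ 2 *
        (2 * (m : ℝ) ^ (2 * n + 1) - (2 * (n : ℝ) + 3) * (m : ℝ) ^ (n + 1)
          + (2 * (n : ℝ) + 1) * (m : ℝ) ^ n + (m : ℝ) - 1) := by
  have hm2 : (2:ℝ) ≤ (m:ℝ) := by exact_mod_cast hm
  have hm1 : (m:ℝ) - 1 ≠ 0 := by linarith
  field_simp
  ring

/-- For integers `m ≥ 2`, `n ≥ 1`, with `A` the `(n+1)×(n+1)` real matrix whose first row is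
`(m-1, …, m-1, 0)` and whose row `i ≥ 1` has a single `1` in column `i-1`, and `W = (1/m)·A`,
the bottom-left entry of `W·(I + W)·((I − W)⁻¹)³` equals
`(m/(m−1)²)·(2·m^{2n+1} − (2n+3)·m^{n+1} + (2n+1)·mⁿ + m − 1)`. -/
theorem stmt_16 (m n : ℕ) (hm : 2 ≤ m) (hn : 1 ≤ n)
    (A W : Matrix (Fin (n + 1)) (Fin (n + 1)) ℝ)
    (hA : ∀ i j : Fin (n + 1), A i j =
      if (i : ℕ) = 0 then (if (j : ℕ) < n then (m : ℝ) - 1 else 0)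
      else (if (j : ℕ) + 1 = (i : ℕ) then 1 else 0))
    (hW : W = (1 / (m : ℝ)) • A) :
    ((W * (1 + W) * ((1 - W)⁻¹) ^ 3 : Matrix (Fin (n + 1)) (Fin (n + 1)) ℝ)) (Fin.last n) 0
      = (m : ℝ) / ((m : ℝ) - 1) ^ 2 *
          (2 * (m : ℝ) ^ (2 * n + 1) - (2 * (n : ℝ) + 3) * (m : ℝ) ^ (n + 1)
            + (2 * (n : ℝ) + 1) * (m : ℝ) ^ n + (m : ℝ) - 1) := by
  have hm2 : (2:ℝ) ≤ (m:ℝ) := by exact_mod_cast hm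
  have hm0 : (m:ℝ) ≠ 0 := by linarith
  have hm1 : (m:ℝ) - 1 ≠ 0 := by linarith
  have hcan : ∀ k : ℕ, (m:ℝ)^k * ((m:ℝ)⁻¹)^k = 1 := fun k => by
    rw [← mul_pow, mul_inv_cancel₀ hm0, one_pow]
  have hmm : (m:ℝ) * (m:ℝ)⁻¹ = 1 := mul_inv_cancel₀ hm0
  have hpred : ∀ j : ℕ, 1 ≤ j → ((m:ℝ)⁻¹)^(j-1) = ((m:ℝ)⁻¹)^j * (m:ℝ) := by
    intro j hj
    have e : j - 1 + 1 = j := by omega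
    calc ((m:ℝ)⁻¹)^(j-1) = ((m:ℝ)⁻¹)^(j-1) * ((m:ℝ)⁻¹ * m) := by
          rw [inv_mul_cancel₀ hm0, mul_one]
      _ = (((m:ℝ)⁻¹)^(j-1) * (m:ℝ)⁻¹) * m := by ring
      _ = ((m:ℝ)⁻¹)^(j-1+1) * m := by rw [pow_succ]
      _ = ((m:ℝ)⁻¹)^j * m := by rw [e]
  set N : Matrix (Fin (n+1)) (Fin (n+1)) ℝ := Matrix.of fun i j : Fin (n+1) =>
      ((m:ℝ)^n - if (i:ℕ) < (j:ℕ) then (m:ℝ)^(j:ℕ) else 0) * ((m:ℝ)⁻¹)^(i:ℕ) with hN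
  -- N is the inverse of (1 - W)
  have hNW : N * (1 - W) = 1 := by
    ext i j
    rw [Matrix.mul_apply, Matrix.one_apply]
    simp only [Matrix.sub_apply, Matrix.one_apply, hW, Matrix.smul_apply, hA, smul_eq_mul,
      mul_sub]
    rw [Finset.sum_sub_distrib]
    have hfirst : (∑ k : Fin (n+1), N i k * if k = j then (1:ℝ) else 0) = N i j := by
      simp only [mul_ite, mul_one, mul_zero]
      rw [Finset.sum_ite_eq' Finset.univ j (fun k => N i k)]
      simp
    rw [hfirst]
    rw [Fin.sum_univ_succ]
    simp only [Fin.val_zero, Fin.val_succ, if_pos rfl, Nat.succ_ne_zero,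
      if_neg (Nat.succ_ne_zero _)]
    simp only [if_true, if_false, add_left_inj]
    by_cases hj : (j:ℕ) < n
    · have hsum : (∑ x : Fin n, N i x.succ * (1 / (m:ℝ) * if (j:ℕ) = (x:ℕ) then 1 else 0))
          = N i (Fin.succ ⟨(j:ℕ), hj⟩) * (1 / (m:ℝ)) := by
        rw [Finset.sum_eq_single (⟨(j:ℕ), hj⟩ : Fin n)]
        · simp
        · intro b _ hb
          have : (j:ℕ) ≠ (b:ℕ) := fun h => hb (by ext; simp [h.symm])
          simp [this]
        · simp
      rw [hsum, if_pos hj]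
      simp only [hN, Matrix.of_apply, Fin.val_succ, Fin.val_zero, Fin.ext_iff, Nat.not_lt_zero, if_false]
      rcases lt_trichotomy (i:ℕ) (j:ℕ) with h | h | h
      · rw [if_pos h, if_pos (by omega : (i:ℕ) < (j:ℕ)+1),
          if_neg (by omega : ¬ (i:ℕ) = (j:ℕ))]
        field_simp
        ring
      · rw [if_neg (by omega), if_pos (by omega : (i:ℕ) < (j:ℕ)+1),
          if_pos h]
        rw [h]
        field_simp
        linear_combination (m:ℝ) * hcan (j:ℕ)
      · rw [if_neg (by omega), if_neg (by omega : ¬ (i:ℕ) < (j:ℕ)+1),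
          if_neg (by omega : ¬ (i:ℕ) = (j:ℕ))]
        field_simp
        ring
    · have hjn : (j:ℕ) = n := by omega
      have hsum : (∑ x : Fin n, N i x.succ * (1 / (m:ℝ) * if (j:ℕ) = (x:ℕ) then 1 else 0)) = 0 := by
        apply Finset.sum_eq_zero
        intro k _
        have : (j:ℕ) ≠ (k:ℕ) := by omega
        simp [this]
      rw [hsum, if_neg hj]
      simp only [hN, Matrix.of_apply, Fin.val_zero, Fin.ext_iff, hjn, Nat.not_lt_zero, if_false]
      rcases eq_or_lt_of_le (Nat.lt_succ_iff.mp i.isLt) with h | h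
      · rw [if_neg (by omega), if_pos h]
        rw [h]
        field_simp
        linear_combination (m:ℝ) * hcan n
      · rw [if_pos h, if_neg (show ¬ (i:ℕ) = n by omega)]
        field_simp
        ring
  have hinv : (1 - W)⁻¹ = N := Matrix.inv_eq_left_inv hNW
  rw [hinv]
  set S : ℝ := ((m:ℝ)^(n+1) - 1)/((m:ℝ) - 1) with hS
  set T : ℝ := ((m:ℝ) * ((n:ℝ)*(m:ℝ)^(n+1) - ((n:ℝ)+1)*(m:ℝ)^n + 1))/((m:ℝ)-1)^2 with hT
  set P : ℝ → ℝ := fun r => S^2 - T - r*S + r*(r-1)/2 with hP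
  set v1 : Fin (n+1) → ℝ := fun i => (m:ℝ)^n * ((m:ℝ)⁻¹)^(i:ℕ) with hv1
  set v2 : Fin (n+1) → ℝ := fun i =>
    (m:ℝ)^n * ((m:ℝ)⁻¹)^(i:ℕ) * (S - (n:ℝ) + ((i:ℕ):ℝ)) with hv2
  set v3 : Fin (n+1) → ℝ := fun i =>
    (m:ℝ)^n * ((m:ℝ)⁻¹)^(i:ℕ) * P ((n:ℝ) - ((i:ℕ):ℝ)) with hv3
  set v4 : Fin (n+1) → ℝ := fun i => if (i:ℕ) = 0
      then ((m:ℝ)-1)/(m:ℝ) * ∑ j ∈ Finset.range n,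
            (m:ℝ)^n * ((m:ℝ)⁻¹)^j * P ((n:ℝ) - (j:ℝ))
      else (m:ℝ)^n * ((m:ℝ)⁻¹)^(i:ℕ) * P ((n:ℝ) - ((i:ℕ):ℝ) + 1) with hv4
  have h1 : N.mulVec (Pi.single (0 : Fin (n+1)) (1:ℝ)) = v1 := by
    funext i
    simp only [Matrix.mulVec_single_one, Matrix.col_apply, mul_one, hN, Matrix.of_apply, hv1, Fin.val_zero,
      Nat.not_lt_zero, if_false, sub_zero]
  have h2 : N.mulVec v1 = v2 := by
    funext i
    have hi : (i:ℕ) ≤ n := Nat.lt_succ_iff.mp i.isLt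
    have step : N.mulVec v1 i = ∑ k ∈ Finset.range (n+1),
        ((((m:ℝ))^n - if (i:ℕ) < k then (m:ℝ)^k else 0) * ((m:ℝ)⁻¹)^(i:ℕ))
          * ((m:ℝ)^n * ((m:ℝ)⁻¹)^k) := by
      simp only [Matrix.mulVec, dotProduct, hN, Matrix.of_apply, hv1]
      exact Fin.sum_univ_eq_sum_range
        (fun k => ((((m:ℝ))^n - if (i:ℕ) < k then (m:ℝ)^k else 0) * ((m:ℝ)⁻¹)^(i:ℕ))
          * ((m:ℝ)^n * ((m:ℝ)⁻¹)^k)) (n+1)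
    rw [step, aux2_16 m n (i:ℕ) hm hi]
  have h3 : N.mulVec v2 = v3 := by
    funext i
    have hi : (i:ℕ) ≤ n := Nat.lt_succ_iff.mp i.isLt
    have step : N.mulVec v2 i = ∑ k ∈ Finset.range (n+1),
        ((((m:ℝ))^n - if (i:ℕ) < k then (m:ℝ)^k else 0) * ((m:ℝ)⁻¹)^(i:ℕ))
          * ((m:ℝ)^n * ((m:ℝ)⁻¹)^k * (S - (n:ℝ) + (k:ℝ))) := by
      simp only [Matrix.mulVec, dotProduct, hN, Matrix.of_apply, hv2]
      exact Fin.sum_univ_eq_sum_range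
        (fun k => ((((m:ℝ))^n - if (i:ℕ) < k then (m:ℝ)^k else 0) * ((m:ℝ)⁻¹)^(i:ℕ))
          * ((m:ℝ)^n * ((m:ℝ)⁻¹)^k * (S - (n:ℝ) + (k:ℝ)))) (n+1)
    rw [step, hS, aux3_16 m n (i:ℕ) hm hi]
  have h5 : W.mulVec v3 = v4 := by
    funext i
    by_cases hi0 : (i:ℕ) = 0
    · have step : W.mulVec v3 i = ∑ k ∈ Finset.range (n+1),
          (1/(m:ℝ)) * (if k < n then (m:ℝ)-1 else 0)
            * ((m:ℝ)^n * ((m:ℝ)⁻¹)^k * P ((n:ℝ) - (k:ℝ))) := by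
        simp only [Matrix.mulVec, dotProduct, hW, Matrix.smul_apply, hA, smul_eq_mul, hv3,
          hi0, if_pos rfl]
        exact Fin.sum_univ_eq_sum_range
          (fun k => (1/(m:ℝ)) * (if k < n then (m:ℝ)-1 else 0)
            * ((m:ℝ)^n * ((m:ℝ)⁻¹)^k * P ((n:ℝ) - (k:ℝ)))) (n+1)
      rw [step, Finset.sum_range_succ, if_neg (lt_irrefl n)]
      have hcongr : ∀ k ∈ Finset.range n,
          (1/(m:ℝ)) * (if k < n then (m:ℝ)-1 else 0)
            * ((m:ℝ)^n * ((m:ℝ)⁻¹)^k * P ((n:ℝ) - (k:ℝ)))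
          = ((m:ℝ)-1)/(m:ℝ) * ((m:ℝ)^n * ((m:ℝ)⁻¹)^k * P ((n:ℝ) - (k:ℝ))) := by
        intro k hk
        rw [if_pos (Finset.mem_range.mp hk)]
        ring
      rw [Finset.sum_congr rfl hcongr, ← Finset.mul_sum]
      simp only [hv4, hi0, eq_self_iff_true, if_true]
      ring
    · have hi1 : 1 ≤ (i:ℕ) := by omega
      have step : W.mulVec v3 i = (1/(m:ℝ)) * v3 ⟨(i:ℕ)-1, by omega⟩ := by
        have expand : W.mulVec v3 i
            = ∑ k : Fin (n+1), (1/(m:ℝ)) * (if (k:ℕ)+1 = (i:ℕ) then 1 else 0) * v3 k := by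
          simp only [Matrix.mulVec, dotProduct, hW, Matrix.smul_apply, smul_eq_mul, hA,
            if_neg hi0]
          try exact Finset.sum_congr rfl fun k _ => by ring
        rw [expand, Finset.sum_eq_single (⟨(i:ℕ)-1, by omega⟩ : Fin (n+1))]
        · rw [if_pos (by simp; omega)]
          ring
        · intro b _ hb
          rw [if_neg (fun hc => hb (by apply Fin.ext; simp at hc ⊢; omega))]
          ring
        · intro h
          exact absurd (Finset.mem_univ _) h
      rw [step]
      simp only [hv3, hv4, if_neg hi0]
      have harg : (n:ℝ) - ((((i:ℕ)-1):ℕ):ℝ) = (n:ℝ) - ((i:ℕ):ℝ) + 1 := by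
        rw [Nat.cast_sub hi1]
        push_cast
        ring
      rw [harg, hpred (i:ℕ) hi1]
      linear_combination ((m:ℝ)^n * ((m:ℝ)⁻¹)^((i:ℕ)) * P ((n:ℝ) - ((i:ℕ):ℝ) + 1)) * hmm
  have hpow : W * (1 + W) * N ^ 3 = W * ((1 + W) * (N * (N * N))) := by
    rw [pow_succ, pow_succ, pow_one]
    simp only [mul_assoc]
  have entry : ∀ (M : Matrix (Fin (n+1)) (Fin (n+1)) ℝ),
      M (Fin.last n) 0 = M.mulVec (Pi.single (0 : Fin (n+1)) (1:ℝ)) (Fin.last n) := by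
    intro M
    simp
  rw [hpow, entry (W * ((1 + W) * (N * (N * N)))), ← Matrix.mulVec_mulVec, ← Matrix.mulVec_mulVec, ← Matrix.mulVec_mulVec,
    ← Matrix.mulVec_mulVec, h1, h2, h3, Matrix.add_mulVec, Matrix.one_mulVec, h5]
  have hn0 : ¬ (n = 0) := by omega
  have hlast : (W.mulVec (v3 + v4)) (Fin.last n)
      = (1/(m:ℝ)) * ((v3 + v4) ⟨n-1, by omega⟩) := by
    have expand : (W.mulVec (v3 + v4)) (Fin.last n)
        = ∑ k : Fin (n+1), (1/(m:ℝ)) * (if (k:ℕ)+1 = n then 1 else 0) * ((v3 + v4) k) := by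
      simp only [Matrix.mulVec, dotProduct, hW, Matrix.smul_apply, smul_eq_mul, hA,
        Fin.val_last, if_neg hn0]
      try exact Finset.sum_congr rfl fun k _ => by ring
    rw [expand, Finset.sum_eq_single (⟨n-1, by omega⟩ : Fin (n+1))]
    · rw [if_pos (by simp; omega)]
      ring
    · intro b _ hb
      rw [if_neg (fun hc => hb (by apply Fin.ext; simp at hc ⊢; omega))]
      ring
    · intro h
      exact absurd (Finset.mem_univ _) h
  rw [hlast]
  simp only [Pi.add_apply, hv3, hv4]
  by_cases hn1 : n = 1
  · subst hn1
    norm_num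
    have hP1 : P 1 = (m:ℝ)^2 := by
      simp only [hP, hS, hT]
      norm_num
      field_simp
      ring
    rw [hP1]
    field_simp
    ring
  · have h2n : 2 ≤ n := by omega
    rw [if_neg (show ¬ (((⟨n-1, by omega⟩ : Fin (n+1)):ℕ) = 0) by simp; omega)]
    have hc : (((n-1 : ℕ)) : ℝ) = (n:ℝ) - 1 := by
      rw [Nat.cast_sub (by omega : 1 ≤ n)]
      norm_num
    have harg : (n:ℝ) - (((⟨n-1, by omega⟩ : Fin (n+1)):ℕ):ℝ) = 1 := by
      show (n:ℝ) - ((n-1:ℕ):ℝ) = 1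
      rw [hc]
      ring
    rw [harg]
    norm_num
    have hxp : ((m:ℝ)^(n-1))⁻¹ = ((m:ℝ)⁻¹)^n * (m:ℝ) := by
      rw [← inv_pow]
      exact hpred n (by omega)
    rw [hxp]
    have hfin : P 1 + P 2 = (m : ℝ) / ((m : ℝ) - 1) ^ 2 *
        (2 * (m : ℝ) ^ (2 * n + 1) - (2 * (n : ℝ) + 3) * (m : ℝ) ^ (n + 1)
          + (2 * (n : ℝ) + 1) * (m : ℝ) ^ n + (m : ℝ) - 1) := by
      simp only [hP]
      rw [hS, hT]
      linear_combination aux_final16 m n hm hn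
    linear_combination hfin + ((P 1 + P 2) * ((m:ℝ)^n * ((m:ℝ)⁻¹)^n)) * hmm
      + (P 1 + P 2) * hcan n
end

section
/- Let m ≥ 2 and n ≥ 1 be integers and let W = (1/m)·A, where A is the (n+1)×(n+1) real matrix with A 0 j = m−1 for 0 ≤ j ≤ n−1, A 0 n = 0, and for 1 ≤ i ≤ n: A i j = 1 if j = i−1 and 0 otherwise. Then every entry of W^k is nonnegative for every k, and the function k ↦ k²·(W^k)_{n,0} is summable over ℕ. -/
private lemma stmt_17_geo (m : ℕ) (hm : 2 ≤ m) (n : ℕ) :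
    ∑ l ∈ Finset.range n, ((m:ℝ)-1)/m * (1/(m:ℝ))^l = 1 - (1/(m:ℝ))^n := by
  have hmR : (2:ℝ) ≤ (m:ℝ) := by exact_mod_cast hm
  have hne : (m:ℝ) ≠ 0 := by linarith
  induction n with
  | zero => simp
  | succ n ih =>
    rw [Finset.sum_range_succ, ih, pow_succ]
    field_simp
    ring

/-- For integers `m ≥ 2`, `n ≥ 1`, with `A` the `(n+1)×(n+1)` real matrix whose first row is
`(m-1, …, m-1, 0)` and whose row `i ≥ 1` has a single `1` in column `i-1`, and `W = (1/m)·A`,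
every entry of `Wᵏ` is nonnegative for every `k`, and `k ↦ k²·(Wᵏ)_{n,0}` is summable. -/
theorem stmt_17 (m n : ℕ) (hm : 2 ≤ m) (hn : 1 ≤ n)
    (A W : Matrix (Fin (n + 1)) (Fin (n + 1)) ℝ)
    (hA : ∀ i j : Fin (n + 1), A i j =
      if (i : ℕ) = 0 then (if (j : ℕ) < n then (m : ℝ) - 1 else 0)
      else (if (j : ℕ) + 1 = (i : ℕ) then 1 else 0))
    (hW : W = (1 / (m : ℝ)) • A) :
    (∀ (k : ℕ) (i j : Fin (n + 1)), 0 ≤ (W ^ k) i j) ∧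
      Summable (fun k : ℕ => (k : ℝ) ^ 2 * (W ^ k) (Fin.last n) 0) := by
  have hmR : (2:ℝ) ≤ (m:ℝ) := by exact_mod_cast hm
  have hm0 : (0:ℝ) < m := by linarith
  -- entries of W
  have hWe : ∀ i j : Fin (n+1), W i j =
      if (i : ℕ) = 0 then (if (j : ℕ) < n then ((m:ℝ) - 1)/m else 0)
      else (if (j : ℕ) + 1 = (i : ℕ) then (1:ℝ)/m else 0) := by
    intro i j
    rw [hW, Matrix.smul_apply, hA i j, smul_eq_mul]
    split_ifs <;> field_simp <;> ring
  have hWnn : ∀ i j, 0 ≤ W i j := by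
    intro i j
    rw [hWe]
    have h1 : (0:ℝ) ≤ ((m:ℝ)-1)/m := by apply div_nonneg <;> linarith
    split_ifs <;> first | exact h1 | positivity | norm_num
  -- nonnegativity of powers
  have hnn : ∀ (k : ℕ) (i j : Fin (n+1)), 0 ≤ (W ^ k) i j := by
    intro k
    induction k with
    | zero =>
      intro i j
      simp only [pow_zero, Matrix.one_apply]
      split_ifs <;> norm_num
    | succ k ih =>
      intro i j
      rw [pow_succ, Matrix.mul_apply]
      exact Finset.sum_nonneg fun l _ => mul_nonneg (ih i l) (hWnn l j)
  refine ⟨hnn, ?_⟩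
  -- column sums of W ≤ 1
  have hcolW : ∀ j : Fin (n+1), ∑ l, W l j ≤ 1 := by
    intro j
    rw [Fin.sum_univ_succ]
    have h0 : W 0 j = if (j:ℕ) < n then ((m:ℝ)-1)/m else 0 := by
      rw [hWe]; simp
    have hs : ∀ l : Fin n, W l.succ j = if (j:ℕ) = (l:ℕ) then (1:ℝ)/m else 0 := by
      intro l
      rw [hWe]
      have hv : ((l.succ : Fin (n+1)) : ℕ) = (l:ℕ) + 1 := rfl
      rw [hv]
      simp only [Nat.succ_ne_zero, if_neg (Nat.succ_ne_zero _)]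
      have he : ((j:ℕ) + 1 = (l:ℕ) + 1) ↔ ((j:ℕ) = (l:ℕ)) := by omega
      simp [he]
    rw [Finset.sum_congr rfl (fun l _ => hs l)]
    have hsum : ∑ l : Fin n, (if (j:ℕ) = (l:ℕ) then (1:ℝ)/m else 0)
        = ∑ l ∈ Finset.range n, (if (j:ℕ) = l then (1:ℝ)/m else 0) :=
      Fin.sum_univ_eq_sum_range (fun l => if (j:ℕ) = l then (1:ℝ)/m else 0) n
    rw [hsum, h0, Finset.sum_ite_eq]
    by_cases hj : (j:ℕ) < n
    · simp only [hj, if_pos, Finset.mem_range, if_pos hj]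
      field_simp
      linarith
    · simp only [hj, Finset.mem_range]
      norm_num
  -- column sums of W^k ≤ 1
  have hcol : ∀ (k : ℕ) (j : Fin (n+1)), ∑ i, (W ^ k) i j ≤ 1 := by
    intro k
    induction k with
    | zero =>
      intro j
      simp [Matrix.one_apply]
    | succ k ih =>
      intro j
      have hexp : ∀ i, (W ^ (k+1)) i j = ∑ l, (W ^ k) i l * W l j := by
        intro i; rw [pow_succ, Matrix.mul_apply]
      rw [Finset.sum_congr rfl (fun i _ => hexp i), Finset.sum_comm]
      calc ∑ l, ∑ i, (W ^ k) i l * W l j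
          = ∑ l, (∑ i, (W ^ k) i l) * W l j := by
            exact Finset.sum_congr rfl fun l _ => (Finset.sum_mul _ _ _).symm
        _ ≤ ∑ l, 1 * W l j := by
            refine Finset.sum_le_sum fun l _ => ?_
            exact mul_le_mul_of_nonneg_right (ih l) (hWnn l j)
        _ = ∑ l, W l j := by simp
        _ ≤ 1 := hcolW j
  -- each entry ≤ 1
  have hle1 : ∀ (k : ℕ) (i j : Fin (n+1)), (W ^ k) i j ≤ 1 := by
    intro k i j
    calc (W ^ k) i j ≤ ∑ i', (W ^ k) i' j :=
          Finset.single_le_sum (fun i' _ => hnn k i' j) (Finset.mem_univ i)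
      _ ≤ 1 := hcol k j
  -- shift lemma
  have hshift : ∀ (k : ℕ) (i : Fin (n+1)) (hi : (i:ℕ) ≠ 0),
      (W ^ (k+1)) i 0 = (1/(m:ℝ)) * (W ^ k) ⟨(i:ℕ)-1, by omega⟩ 0 := by
    intro k i hi
    rw [pow_succ', Matrix.mul_apply]
    rw [Finset.sum_eq_single (⟨(i:ℕ)-1, by omega⟩ : Fin (n+1))]
    · congr 1
      rw [hWe]
      have h1 : ((⟨(i:ℕ)-1, by omega⟩ : Fin (n+1)) : ℕ) = (i:ℕ) - 1 := rfl
      rw [if_neg hi, h1, if_pos (by omega)]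
    · intro l _ hl
      rw [hWe, if_neg hi]
      have hne : ¬ ((l:ℕ) + 1 = (i:ℕ)) := by
        intro h
        apply hl
        apply Fin.ext
        show (l:ℕ) = (i:ℕ) - 1
        omega
      rw [if_neg hne, zero_mul]
    · intro h; exact absurd (Finset.mem_univ _) h
  have key : ∀ (e1 e2 : ℕ) (a b : Fin (n+1)), e1 = e2 → a = b →
      (W ^ e1) a 0 = (W ^ e2) b 0 := by
    rintro e1 e2 a b rfl rfl; rfl
  -- iterated shift
  have hiter : ∀ (j k : ℕ), j ≤ k → ∀ (i : Fin (n+1)) (hij : j ≤ (i:ℕ)),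
      (W ^ k) i 0 = (1/(m:ℝ))^j * (W ^ (k-j)) ⟨(i:ℕ)-j, by omega⟩ 0 := by
    intro j
    induction j with
    | zero =>
      intro k _ i _
      simp only [pow_zero, Nat.sub_zero, one_mul]
    | succ j ih =>
      intro k hk i hij
      obtain ⟨k', rfl⟩ : ∃ k', k = k' + 1 := ⟨k - 1, by omega⟩
      rw [hshift k' i (by omega)]
      rw [ih k' (by omega) ⟨(i:ℕ)-1, by omega⟩ (by show j ≤ (i:ℕ)-1; omega)]
      rw [key (k'-j) (k'+1-(j+1)) ⟨(i:ℕ)-1-j, by omega⟩ ⟨(i:ℕ)-(j+1), by omega⟩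
        (by omega) (Fin.ext (by show (i:ℕ)-1-j = (i:ℕ)-(j+1); omega)), pow_succ]
      ring
  -- row-0 recurrence
  have hrec : ∀ k, n - 1 ≤ k → (W ^ (k+1)) 0 0 =
      ∑ l ∈ Finset.range n, ((m:ℝ)-1)/m * ((1/(m:ℝ))^l * (W ^ (k-l)) 0 0) := by
    intro k hk
    rw [pow_succ', Matrix.mul_apply]
    set g : ℕ → ℝ := fun l =>
      (if l < n then ((m:ℝ)-1)/m else 0) * ((1/(m:ℝ))^l * (W ^ (k-l)) 0 0) with hg
    have h1 : ∀ l : Fin (n+1), W 0 l * (W ^ k) l 0 = g (l:ℕ) := by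
      intro l
      have h00 : ((0 : Fin (n+1)) : ℕ) = 0 := rfl
      rw [hWe, if_pos h00, hg]
      by_cases hl : (l:ℕ) < n
      · simp only [if_pos hl]
        congr 1
        rw [hiter (l:ℕ) k (by omega) l le_rfl]
        congr 1
        exact congrFun (congrArg _ (Fin.ext (by simp) :
          (⟨(l:ℕ)-(l:ℕ), by omega⟩ : Fin (n+1)) = 0)) 0
      · simp only [if_neg hl, zero_mul]
    rw [Finset.sum_congr rfl (fun l _ => h1 l), Fin.sum_univ_eq_sum_range g (n+1),
      Finset.sum_range_succ]
    have hgn : g n = 0 := by rw [hg]; simp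
    rw [hgn, add_zero]
    refine Finset.sum_congr rfl fun l hl => ?_
    rw [hg]
    simp only [if_pos (Finset.mem_range.mp hl)]
  -- geometric sum
  have hne : (m:ℝ) ≠ 0 := by linarith
  have hgeo : ∑ l ∈ Finset.range n, ((m:ℝ)-1)/m * (1/(m:ℝ))^l = 1 - (1/(m:ℝ))^n :=
    stmt_17_geo m hm n
  set ρ : ℝ := 1 - (1/(m:ℝ))^n with hρ
  have hmi0 : (0:ℝ) < 1/(m:ℝ) := by positivity
  have hmi1 : (1:ℝ)/(m:ℝ) ≤ 1/2 := by
    rw [div_le_div_iff₀ hm0 (by norm_num)]; linarith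
  have hpow1 : (1/(m:ℝ))^n ≤ 1/(m:ℝ) := by
    calc (1/(m:ℝ))^n ≤ (1/(m:ℝ))^1 :=
          pow_le_pow_of_le_one hmi0.le (by linarith) hn
      _ = 1/(m:ℝ) := pow_one _
  have hρ0 : 0 < ρ := by
    have h2 : (1/(m:ℝ))^n ≤ 1/2 := hpow1.trans hmi1
    rw [hρ]; linarith
  have hρ1 : ρ < 1 := by
    have h2 : (0:ℝ) < (1/(m:ℝ))^n := by positivity
    rw [hρ]; linarith
  -- main bound on (W^k) 0 0
  have habound : ∀ k : ℕ, (W ^ k) 0 0 ≤ ρ ^ (k / n) := by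
    intro k
    induction k using Nat.strong_induction_on with
    | _ k ih =>
      rcases lt_or_ge k n with hkn | hkn
      · rw [Nat.div_eq_of_lt hkn, pow_zero]
        exact hle1 k 0 0
      · obtain ⟨k', rfl⟩ : ∃ k', k = k' + 1 := ⟨k - 1, by omega⟩
        rw [hrec k' (by omega)]
        have hq1 : 1 ≤ (k'+1)/n := (Nat.one_le_div_iff (by omega)).mpr (by omega)
        calc ∑ l ∈ Finset.range n, ((m:ℝ)-1)/m * ((1/(m:ℝ))^l * (W ^ (k'-l)) 0 0)
            ≤ ∑ l ∈ Finset.range n, ((m:ℝ)-1)/m * ((1/(m:ℝ))^l * ρ ^ ((k'+1)/n - 1)) := by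
              refine Finset.sum_le_sum fun l hl => ?_
              have hl' := Finset.mem_range.mp hl
              have h1 : (W ^ (k'-l)) 0 0 ≤ ρ ^ ((k'-l)/n) := ih (k'-l) (by omega)
              have h2 : ρ ^ ((k'-l)/n) ≤ ρ ^ ((k'+1)/n - 1) := by
                apply pow_le_pow_of_le_one hρ0.le hρ1.le
                have e1 : ((k'+1)/n - 1) * n = (k'+1)/n * n - n := by
                  rw [Nat.sub_mul, one_mul]
                have e2 : (k'+1)/n * n ≤ k'+1 := Nat.div_mul_le_self _ _
                exact (Nat.le_div_iff_mul_le (by omega)).mpr (by omega)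
              have h3 : (0:ℝ) ≤ ((m:ℝ)-1)/m := by
                apply div_nonneg <;> linarith
              exact mul_le_mul_of_nonneg_left
                (mul_le_mul_of_nonneg_left (h1.trans h2) (by positivity)) h3
          _ = (∑ l ∈ Finset.range n, ((m:ℝ)-1)/m * (1/(m:ℝ))^l) * ρ ^ ((k'+1)/n - 1) := by
              rw [Finset.sum_mul]
              exact Finset.sum_congr rfl fun l _ => (mul_assoc _ _ _).symm
          _ = ρ * ρ ^ ((k'+1)/n - 1) := by rw [hgeo]
          _ = ρ ^ ((k'+1)/n) := by
              rw [← pow_succ']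
              congr 1
              omega
  -- geometric majorant
  set r : ℝ := ρ ^ ((n:ℝ)⁻¹) with hr
  have hr0 : 0 < r := Real.rpow_pos_of_pos hρ0 _
  have hr1 : r < 1 := Real.rpow_lt_one hρ0.le hρ1 (by positivity)
  have hrn : r ^ n = ρ := Real.rpow_inv_natCast_pow hρ0.le (by omega)
  have hfin : ∀ k : ℕ, (W ^ k) (Fin.last n) 0 ≤ (1 / r^(2*n)) * r^k := by
    intro k
    rcases lt_or_ge k n with hkn | hkn
    · have h0 : (W ^ k) (Fin.last n) 0 = 0 := by
        rw [hiter k k le_rfl (Fin.last n) (by simp [Fin.last]; omega)]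
        have hz : (W ^ (k-k)) ⟨(Fin.last n : ℕ) - k, by omega⟩ 0 = 0 := by
          rw [Nat.sub_self, pow_zero]
          exact Matrix.one_apply_ne (by
            intro h
            have hc := congrArg Fin.val h
            simp [Fin.last] at hc
            omega)
        rw [hz, mul_zero]
      rw [h0]
      positivity
    · rw [hiter n k hkn (Fin.last n) (by simp [Fin.last])]
      have hidx : (⟨(Fin.last n : ℕ) - n, by omega⟩ : Fin (n+1)) = 0 := by
        apply Fin.ext
        simp [Fin.last]
      rw [hidx]
      calc (1/(m:ℝ))^n * (W ^ (k-n)) 0 0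
          ≤ 1 * ρ ^ ((k-n)/n) := by
            gcongr
            · exact hnn _ 0 0
            · calc (1/(m:ℝ))^n ≤ 1/(m:ℝ) := hpow1
                _ ≤ 1 := by rw [div_le_one hm0]; linarith
            · exact habound (k-n)
        _ = ρ ^ ((k-n)/n) := one_mul _
        _ = (r^n) ^ ((k-n)/n) := by rw [hrn]
        _ = r ^ (n * ((k-n)/n)) := by rw [← pow_mul]
        _ ≤ r ^ (k - 2*n) := by
            apply pow_le_pow_of_le_one hr0.le hr1.le
            have h1 := Nat.div_add_mod (k-n) n
            have h2 := Nat.mod_lt (k-n) (show 0 < n by omega)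
            omega
        _ ≤ (1 / r^(2*n)) * r^k := by
            rw [one_div, inv_mul_eq_div, le_div_iff₀ (by positivity)]
            calc r ^ (k-2*n) * r^(2*n) = r ^ ((k-2*n) + 2*n) := by rw [← pow_add]
              _ ≤ r ^ k := pow_le_pow_of_le_one hr0.le hr1.le (by omega)
  have hsum : Summable (fun k : ℕ => (k:ℝ)^2 * ((1 / r^(2*n)) * r^k)) := by
    have h := summable_pow_mul_geometric_of_norm_lt_one (R := ℝ) 2
      (r := r) (by rw [Real.norm_eq_abs, abs_of_pos hr0]; exact hr1)
    exact (h.mul_left (1 / r^(2*n))).congr (fun k => by ring)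
  refine Summable.of_nonneg_of_le
    (fun k => mul_nonneg (by positivity) (hnn k _ 0)) (fun k => ?_) hsum
  exact mul_le_mul_of_nonneg_left (hfin k) (by positivity)
end
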